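/- (Reconstruction for Type I.) Let k ≥ 2, d = 2k-2, α = d-k+1 = k-1, and n ≥ k. Let x_1, ..., x_n be nonzero elements of a finite field F_q with x_i^α ≠ x_j^α for i ≠ j, and let ρ_i = (1, x_i, ..., x_i^{d-1}). If T_1, T_2 and T_1', T_2' are symmetric (k-1)×(k-1) matrices over F_q, M = [T_1; T_2] and M' = [T_1'; T_2'] are the corresponding stacked d×α matrices, and i_1, ..., i_k are k distinct indices with ρ_{i_j} M = ρ_{i_j} M' for every j = 1, ..., k, then T_1 = T_1' and T_2 = T_2'. Equivalently, any k shares determine all B = k(k-1) message symbols. -/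

import Mathlib

open Matrix

/-- **Reconstruction for Type I.**  Let `k ≥ 2`, `d = 2k-2`,
`α = d - k + 1 = k - 1`, `n ≥ k`, and let `x 0, …, x (n-1)` be nonzero elements of a
finite field `F` whose `α`-th powers are pairwise distinct; the coding vector of
node `i` is `ρ i = (1, x i, …, (x i)^(d-1))` (here indexed by
`Fin (k-1) ⊕ Fin (k-1)`, with the second summand carrying the exponents
`k-1, …, 2k-3`).  If `T1, T2` and `T1', T2'` are symmetric `(k-1) × (k-1)` matrices,
`M = [T1; T2]` and `M' = [T1'; T2']` the stacked `d × α` matrices, and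
`idx 0, …, idx (k-1)` are `k` distinct indices with `ρ (idx j) * M = ρ (idx j) * M'`
for every `j`, then `T1 = T1'` and `T2 = T2'`:  any `k` shares determine all
`B = k(k-1)` message symbols. -/
theorem typeI_reconstruction {F : Type*} [Field F] [Fintype F]
    (k n : ℕ) (hk : 2 ≤ k) (hn : k ≤ n)
    (x : Fin n → F) (hx0 : ∀ i, x i ≠ 0)
    (hx : ∀ i j : Fin n, i ≠ j → x i ^ (k - 1) ≠ x j ^ (k - 1))
    (T1 T2 T1' T2' : Matrix (Fin (k - 1)) (Fin (k - 1)) F)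
    (hT1 : T1.IsSymm) (hT2 : T2.IsSymm) (hT1' : T1'.IsSymm) (hT2' : T2'.IsSymm)
    (idx : Fin k → Fin n) (hidx : Function.Injective idx)
    (hshare : ∀ j : Fin k,
      (Sum.elim (fun t : Fin (k - 1) => x (idx j) ^ (t : ℕ))
          (fun t : Fin (k - 1) => x (idx j) ^ (k - 1 + (t : ℕ)))) ᵥ*
        Matrix.fromRows T1 T2 =
      (Sum.elim (fun t : Fin (k - 1) => x (idx j) ^ (t : ℕ))
          (fun t : Fin (k - 1) => x (idx j) ^ (k - 1 + (t : ℕ)))) ᵥ*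
        Matrix.fromRows T1' T2') :
    T1 = T1' ∧ T2 = T2' := by
  obtain ⟨m, rfl⟩ : ∃ m, k = m + 1 := ⟨k - 1, (Nat.succ_pred_eq_of_pos (by omega)).symm⟩
  -- now k - 1 is defeq to m
  set z : Fin (m + 1) → F := fun j => x (idx j) with hz
  have hzm : ∀ i j : Fin (m + 1), i ≠ j → z i ^ m ≠ z j ^ m := by
    intro i j h
    exact hx _ _ (fun e => h (hidx e))
  have hzinj : Function.Injective z := by
    intro i j h
    by_contra hne
    exact hzm i j hne (by rw [h])
  set S1 : Matrix (Fin m) (Fin m) F := T1 - T1' with hS1def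
  set S2 : Matrix (Fin m) (Fin m) F := T2 - T2' with hS2def
  have hS1 : S1ᵀ = S1 := by
    simp [hS1def, Matrix.transpose_sub, hT1.eq, hT1'.eq]
  have hS2 : S2ᵀ = S2 := by
    simp [hS2def, Matrix.transpose_sub, hT2.eq, hT2'.eq]
  set u : Fin (m + 1) → Fin m → F := fun j t => z j ^ (t : ℕ) with hu
  have key : ∀ j, u j ᵥ* S1 + z j ^ m • (u j ᵥ* S2) = 0 := by
    intro j
    have h := hshare j
    rw [sumElim_vecMul_fromRows, sumElim_vecMul_fromRows] at h
    have hv : (fun t : Fin m => z j ^ (m + (t : ℕ))) = z j ^ m • u j := by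
      funext t; simp [hu, pow_add]
    have h' : u j ᵥ* T1 + (z j ^ m • u j) ᵥ* T2 =
        u j ᵥ* T1' + (z j ^ m • u j) ᵥ* T2' := by
      rw [← hv]; exact h
    rw [Matrix.smul_vecMul, Matrix.smul_vecMul] at h'
    have : u j ᵥ* T1 - u j ᵥ* T1' + (z j ^ m • (u j ᵥ* T2) - z j ^ m • (u j ᵥ* T2')) = 0 := by
      rw [sub_add_sub_comm, h', sub_self]
    rw [← Matrix.vecMul_sub, ← smul_sub, ← Matrix.vecMul_sub] at this
    exact this
  -- bilinear forms
  set B : Matrix (Fin (m + 1)) (Fin (m + 1)) F :=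
    Matrix.of fun i j => (u i ᵥ* S2) ⬝ᵥ u j with hB
  set A : Matrix (Fin (m + 1)) (Fin (m + 1)) F :=
    Matrix.of fun i j => (u i ᵥ* S1) ⬝ᵥ u j with hA
  have symmAux : ∀ (S : Matrix (Fin m) (Fin m) F), Sᵀ = S →
      ∀ i j, (u i ᵥ* S) ⬝ᵥ u j = (u j ᵥ* S) ⬝ᵥ u i := by
    intro S hS i j
    calc (u i ᵥ* S) ⬝ᵥ u j = u j ⬝ᵥ (u i ᵥ* S) := dotProduct_comm _ _
      _ = u j ⬝ᵥ (Sᵀ *ᵥ u i) := by rw [← Matrix.vecMul_transpose, Matrix.transpose_transpose]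
      _ = (u j ᵥ* Sᵀ) ⬝ᵥ u i := by rw [Matrix.dotProduct_mulVec]
      _ = (u j ᵥ* S) ⬝ᵥ u i := by rw [hS]
  have hAB : ∀ i j, A i j + z i ^ m * B i j = 0 := by
    intro i j
    have := congrArg (fun w => w ⬝ᵥ u j) (key i)
    simpa [add_dotProduct, smul_dotProduct, smul_eq_mul, hA, hB] using this
  have hBoff : ∀ i j, i ≠ j → B i j = 0 := by
    intro i j hij
    have h1 := hAB i j
    have h2 := hAB j i
    have hAsym : A i j = A j i := symmAux S1 hS1 i j
    have hBsym : B i j = B j i := symmAux S2 hS2 i j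
    have h0 : (z i ^ m - z j ^ m) * B i j = 0 := by
      rw [← hAsym, ← hBsym] at h2
      linear_combination h1 - h2
    rcases mul_eq_zero.mp h0 with h | h
    · exact absurd (sub_eq_zero.mp h) (hzm i j hij)
    · exact h
  -- each row of Ψ S2 is zero
  have hrow2 : ∀ i, u i ᵥ* S2 = 0 := by
    intro i
    apply eq_zero_of_forall_index_sum_mul_pow_eq_zero
      (f := fun t : Fin m => z (i.succAbove t))
      (hzinj.comp (Fin.succAbove_right_injective))
    intro t
    have := hBoff i (i.succAbove t) (Fin.succAbove_ne i t).symm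
    simpa [hB, dotProduct, hu] using this
  have hS2zero : S2 = 0 := by
    ext s c
    have hcol : (fun s : Fin m => S2 s c) = 0 := by
      apply eq_zero_of_forall_index_sum_pow_mul_eq_zero
        (f := fun t : Fin m => z t.castSucc)
        (hzinj.comp (Fin.castSucc_injective m))
      intro t
      have := congrFun (hrow2 t.castSucc) c
      simpa [Matrix.vecMul, dotProduct, hu] using this
    simpa using congrFun hcol s
  have hrow1 : ∀ i, u i ᵥ* S1 = 0 := by
    intro i
    have := key i
    rw [hS2zero, Matrix.vecMul_zero, smul_zero, add_zero] at this
    exact this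
  have hS1zero : S1 = 0 := by
    ext s c
    have hcol : (fun s : Fin m => S1 s c) = 0 := by
      apply eq_zero_of_forall_index_sum_pow_mul_eq_zero
        (f := fun t : Fin m => z t.castSucc)
        (hzinj.comp (Fin.castSucc_injective m))
      intro t
      have := congrFun (hrow1 t.castSucc) c
      simpa [Matrix.vecMul, dotProduct, hu] using this
    simpa using congrFun hcol s
  constructor
  · exact sub_eq_zero.mp hS1zero
  · exact sub_eq_zero.mp hS2zero
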